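/- For positive semidefinite matrices A, B, the Powers–Størmer-type inequality ‖A^{1/2} − B^{1/2}‖_F² ≤ ‖A − B‖_{S1} (trace norm) holds, where ‖M‖_{S1} = Tr((MᵀM)^{1/2}). -/

import Mathlib

open Matrix
open scoped Classical

/-- The positive semidefinite square root of a matrix (and `0` if the matrix is not
positive semidefinite). -/
noncomputable def msqrt {d : ℕ} (A : Matrix (Fin d) (Fin d) ℝ) : Matrix (Fin d) (Fin d) ℝ :=
  if h : A.PosSemidef then
    h.1.eigenvectorUnitary.1 * diagonal (((↑) : ℝ → ℝ) ∘ (Real.sqrt ∘ h.1.eigenvalues)) *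
      (star h.1.eigenvectorUnitary : Matrix (Fin d) (Fin d) ℝ)
  else 0

/-- Squared Frobenius (Hilbert–Schmidt) norm `‖M‖_F² = Tr(MᵀM)`. -/
noncomputable def frobSq {d : ℕ} (M : Matrix (Fin d) (Fin d) ℝ) : ℝ := (Mᵀ * M).trace

namespace Matrix.PosSemidef

/-- The positive semidefinite square root (replacement for the removed Mathlib definition). -/
noncomputable def sqrt {d : ℕ} {A : Matrix (Fin d) (Fin d) ℝ} (h : A.PosSemidef) :
    Matrix (Fin d) (Fin d) ℝ :=
  h.1.eigenvectorUnitary.1 * diagonal (((↑) : ℝ → ℝ) ∘ (Real.sqrt ∘ h.1.eigenvalues)) *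
    (star h.1.eigenvectorUnitary : Matrix (Fin d) (Fin d) ℝ)

open scoped MatrixOrder in
lemma sqrt_eq_cfc {d : ℕ} {A : Matrix (Fin d) (Fin d) ℝ} (h : A.PosSemidef) :
    h.sqrt = CFC.sqrt A := by
  have h0 : (0 : Matrix (Fin d) (Fin d) ℝ) ≤ A := h.nonneg
  rw [CFC.sqrt_eq_real_sqrt A h0, cfcₙ_eq_cfc, h.1.cfc_eq, IsHermitian.cfc,
    Unitary.conjStarAlgAut_apply, sqrt]
  rfl

open scoped MatrixOrder in
lemma posSemidef_sqrt {d : ℕ} {A : Matrix (Fin d) (Fin d) ℝ} (h : A.PosSemidef) :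
    h.sqrt.PosSemidef := by
  rw [sqrt_eq_cfc]
  exact (CFC.sqrt_nonneg A).posSemidef

open scoped MatrixOrder in
lemma sqrt_mul_self {d : ℕ} {A : Matrix (Fin d) (Fin d) ℝ} (h : A.PosSemidef) :
    h.sqrt * h.sqrt = A := by
  rw [sqrt_eq_cfc]
  exact CFC.sqrt_mul_sqrt_self A h.nonneg

open scoped MatrixOrder in
lemma eq_sqrt_of_sq_eq {d : ℕ} {A B : Matrix (Fin d) (Fin d) ℝ} (hA : A.PosSemidef)
    (hB : B.PosSemidef) (hAB : A ^ 2 = B) : A = hB.sqrt := by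
  rw [sqrt_eq_cfc]
  exact (CFC.sqrt_unique (by rw [← hAB, sq]) hA.nonneg).symm

end Matrix.PosSemidef

lemma msqrt_def {d : ℕ} {A : Matrix (Fin d) (Fin d) ℝ} (h : A.PosSemidef) :
    msqrt A = h.sqrt := by
  rw [msqrt, dif_pos h]; rfl


lemma psd_diag_nonneg {d : ℕ} {X : Matrix (Fin d) (Fin d) ℝ} (hX : X.PosSemidef) (i : Fin d) :
    0 ≤ X i i := by
  exact hX.diag_nonneg

lemma abs_psd {d : ℕ} {M : Matrix (Fin d) (Fin d) ℝ} (hM : M.IsHermitian)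
    (h2 : (Mᵀ * M).PosSemidef) :
    (h2.sqrt - M).PosSemidef ∧ (h2.sqrt + M).PosSemidef := by
  set V : Matrix (Fin d) (Fin d) ℝ := (hM.eigenvectorUnitary : Matrix (Fin d) (Fin d) ℝ) with hV
  obtain ⟨hV1, hV2⟩ := hM.eigenvectorUnitary.2
  set μ := hM.eigenvalues with hμ
  have hspec : M = V * diagonal μ * star V := by
    have := hM.spectral_theorem
    simpa [RCLike.ofReal_real_eq_id] using this
  set N : Matrix (Fin d) (Fin d) ℝ := V * diagonal (fun i => |μ i|) * star V with hN
  have hNpsd : N.PosSemidef := by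
    have : (diagonal (fun i => |μ i|) : Matrix (Fin d) (Fin d) ℝ).PosSemidef :=
      PosSemidef.diagonal (fun i => abs_nonneg _)
    simpa [hN, Matrix.star_eq_conjTranspose] using this.mul_mul_conjTranspose_same V
  have hconj : ∀ f g : Fin d → ℝ,
      (V * diagonal f * star V) * (V * diagonal g * star V) = V * diagonal (fun i => f i * g i) * star V := by
    intro f g
    rw [mul_assoc, mul_assoc, ← mul_assoc (star V), ← mul_assoc (star V), hV1, one_mul,
      ← mul_assoc, ← mul_assoc, mul_assoc _ (diagonal f), diagonal_mul_diagonal]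
  have hsq : N ^ 2 = Mᵀ * M := by
    have hMt : Mᵀ = M := by
      have := hM.eq; rwa [conjTranspose_eq_transpose_of_trivial] at this
    rw [hMt, pow_two, hN, hconj]
    conv_rhs => rw [hspec, hconj]
    simp only [abs_mul_abs_self]
  have hNR : N = h2.sqrt := hNpsd.eq_sqrt_of_sq_eq h2 hsq
  have hdsub : (diagonal fun i => |μ i|) - diagonal μ = diagonal (fun i => |μ i| - μ i) := by
    ext i j; by_cases h : i = j <;> simp [h, diagonal]
  have hdadd : (diagonal fun i => |μ i|) + diagonal μ = diagonal (fun i => |μ i| + μ i) := by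
    ext i j; by_cases h : i = j <;> simp [h, diagonal]
  constructor
  · rw [← hNR, hspec, hN, ← sub_mul, ← mul_sub V, hdsub]
    have := (PosSemidef.diagonal (fun i => by simp [sub_nonneg, le_abs_self] :
      ∀ i, 0 ≤ |μ i| - μ i)).mul_mul_conjTranspose_same V
    simpa [Matrix.star_eq_conjTranspose] using this
  · rw [← hNR, hspec, hN, ← add_mul, ← mul_add V, hdadd]
    have := (PosSemidef.diagonal (fun i => by linarith [neg_abs_le (μ i)] :
      ∀ i, 0 ≤ |μ i| + μ i)).mul_mul_conjTranspose_same V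
    simpa [Matrix.star_eq_conjTranspose] using this

/-- Powers–Størmer inequality: for positive semidefinite matrices `A`, `B`,
`‖A^{1/2} − B^{1/2}‖_F² ≤ ‖A − B‖_{S1}` where `‖M‖_{S1} = Tr((MᵀM)^{1/2})`. -/
theorem powers_stormer {d : ℕ} (A B : Matrix (Fin d) (Fin d) ℝ)
    (hA : A.PosSemidef) (hB : B.PosSemidef) :
    frobSq (msqrt A - msqrt B) ≤ (msqrt ((A - B)ᵀ * (A - B))).trace := by
  have h2 : ((A - B)ᵀ * (A - B)).PosSemidef := posSemidef_conjTranspose_mul_self (A - B)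
  rw [frobSq, msqrt_def hA, msqrt_def hB, msqrt_def h2]
  set P := hA.sqrt with hP
  set Q := hB.sqrt with hQ
  set M := A - B with hMdef
  set D : Matrix (Fin d) (Fin d) ℝ := P - Q with hDdef
  set S : Matrix (Fin d) (Fin d) ℝ := P + Q with hSdef
  set R := h2.sqrt with hRdef
  have hPH : P.IsHermitian := hA.posSemidef_sqrt.1
  have hQH : Q.IsHermitian := hB.posSemidef_sqrt.1
  have hMH : M.IsHermitian := hA.1.sub hB.1
  have hDH : D.IsHermitian := hPH.sub hQH
  -- R ± M PSD
  obtain ⟨hRM1, hRM2⟩ := abs_psd hMH h2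
  -- spectral data of D
  set U : Matrix (Fin d) (Fin d) ℝ := (hDH.eigenvectorUnitary : Matrix (Fin d) (Fin d) ℝ) with hU
  obtain ⟨hU1, hU2⟩ := hDH.eigenvectorUnitary.2
  set lam := hDH.eigenvalues with hlam
  have hspec : D = U * diagonal lam * star U := by
    have := hDH.spectral_theorem
    simpa [RCLike.ofReal_real_eq_id] using this
  have hconjD : star U * D * U = diagonal lam := by
    rw [hspec]
    calc star U * (U * diagonal lam * star U) * U
        = (star U * U) * diagonal lam * (star U * U) := by noncomm_ring
      _ = diagonal lam := by rw [hU1]; noncomm_ring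
  -- conjugation facts
  have hconj_mul : ∀ X Y : Matrix (Fin d) (Fin d) ℝ,
      (star U * X * U) * (star U * Y * U) = star U * (X * Y) * U := by
    intro X Y
    calc (star U * X * U) * (star U * Y * U)
        = star U * X * (U * star U) * Y * U := by noncomm_ring
      _ = star U * (X * Y) * U := by rw [hU2]; noncomm_ring
  have hconj_trace : ∀ X : Matrix (Fin d) (Fin d) ℝ, (star U * X * U).trace = X.trace := by
    intro X
    rw [trace_mul_comm, ← mul_assoc, hU2, one_mul]
  have hconj_psd : ∀ X : Matrix (Fin d) (Fin d) ℝ, X.PosSemidef → (star U * X * U).PosSemidef := by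
    intro X hX
    have := hX.conjTranspose_mul_mul_same U
    simpa [Matrix.star_eq_conjTranspose] using this
  -- the key algebraic identity: M + M = D * S + S * D
  have hkey : M + M = D * S + S * D := by
    have hPP : P * P = A := hA.sqrt_mul_self
    have hQQ : Q * Q = B := hB.sqrt_mul_self
    have : D * S + S * D = (P * P - Q * Q) + (P * P - Q * Q) := by
      rw [hDdef, hSdef]; noncomm_ring
    rw [this, hPP, hQQ, hMdef]
  -- conjugated matrices
  set M' := star U * M * U with hM'
  set S' := star U * S * U with hS'
  set R' := star U * R * U with hR'
  have hkey' : M' + M' = diagonal lam * S' + S' * diagonal lam := by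
    calc M' + M' = star U * (M + M) * U := by rw [hM']; noncomm_ring
      _ = star U * (D * S + S * D) * U := by rw [hkey]
      _ = (star U * D * U) * (star U * S * U) + (star U * S * U) * (star U * D * U) := by
          rw [hconj_mul, hconj_mul]; noncomm_ring
      _ = diagonal lam * S' + S' * diagonal lam := by rw [hconjD]
  have hMdiag : ∀ i, M' i i = lam i * S' i i := by
    intro i
    have h := congrArg (fun X => X i i) hkey'
    simp only [Matrix.add_apply] at h
    have hd1 : (diagonal lam * S') i i = lam i * S' i i := by
      simp [Matrix.mul_apply, diagonal]
    have hd2 : (S' * diagonal lam) i i = S' i i * lam i := by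
      simp [Matrix.mul_apply, diagonal]
    rw [hd1, hd2] at h
    linarith [mul_comm (lam i) (S' i i), h]
  -- |lam i| ≤ S' i i
  have hSD1 : (S' - diagonal lam).PosSemidef := by
    have : S - D = Q + Q := by rw [hSdef, hDdef]; abel
    have hpsd : (S - D).PosSemidef := this ▸ hB.posSemidef_sqrt.add hB.posSemidef_sqrt
    have := hconj_psd _ hpsd
    have heq : star U * (S - D) * U = S' - diagonal lam := by
      rw [Matrix.mul_sub, Matrix.sub_mul, hconjD, hS']
    rwa [heq] at this
  have hSD2 : (S' + diagonal lam).PosSemidef := by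
    have : S + D = P + P := by rw [hSdef, hDdef]; abel
    have hpsd : (S + D).PosSemidef := this ▸ hA.posSemidef_sqrt.add hA.posSemidef_sqrt
    have := hconj_psd _ hpsd
    have heq : star U * (S + D) * U = S' + diagonal lam := by
      rw [Matrix.mul_add, Matrix.add_mul, hconjD, hS']
    rwa [heq] at this
  have habs : ∀ i, |lam i| ≤ S' i i := by
    intro i
    have h1 := psd_diag_nonneg hSD1 i
    have h2 := psd_diag_nonneg hSD2 i
    simp only [Matrix.sub_apply, Matrix.add_apply, diagonal_apply_eq] at h1 h2
    rw [abs_le]; constructor <;> linarith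
  -- R' ± M' PSD, so R' i i ≥ |M' i i|
  have hRM1' : (R' - M').PosSemidef := by
    have := hconj_psd _ hRM1
    have heq : star U * (R - M) * U = R' - M' := by
      rw [Matrix.mul_sub, Matrix.sub_mul, hR', hM']
    rwa [heq] at this
  have hRM2' : (R' + M').PosSemidef := by
    have := hconj_psd _ hRM2
    have heq : star U * (R + M) * U = R' + M' := by
      rw [Matrix.mul_add, Matrix.add_mul, hR', hM']
    rwa [heq] at this
  have hRge : ∀ i, lam i ^ 2 ≤ R' i i := by
    intro i
    have h1 := psd_diag_nonneg hRM1' i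
    have h2 := psd_diag_nonneg hRM2' i
    simp only [Matrix.sub_apply, Matrix.add_apply] at h1 h2
    have hMabs : |M' i i| ≤ R' i i := by rw [abs_le]; constructor <;> linarith
    have : |M' i i| = |lam i| * S' i i := by
      rw [hMdiag i, abs_mul, abs_of_nonneg (le_trans (abs_nonneg _) (habs i))]
    calc lam i ^ 2 = |lam i| * |lam i| := by rw [abs_mul_abs_self, sq]
      _ ≤ |lam i| * S' i i := by
          exact mul_le_mul_of_nonneg_left (habs i) (abs_nonneg _)
      _ = |M' i i| := this.symm
      _ ≤ R' i i := hMabs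
  -- assemble
  have hDt : Dᵀ = D := by
    have := hDH.eq; rwa [conjTranspose_eq_transpose_of_trivial] at this
  have hlhs : (Dᵀ * D).trace = ∑ i, lam i ^ 2 := by
    rw [hDt]
    have : D * D = U * diagonal (fun i => lam i * lam i) * star U := by
      conv_lhs => rw [hspec]
      calc (U * diagonal lam * star U) * (U * diagonal lam * star U)
          = U * diagonal lam * (star U * U) * diagonal lam * star U := by noncomm_ring
        _ = U * (diagonal lam * diagonal lam) * star U := by rw [hU1]; noncomm_ring
        _ = U * diagonal (fun i => lam i * lam i) * star U := by rw [diagonal_mul_diagonal]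
    rw [this, trace_mul_comm, ← mul_assoc, hU1, one_mul, trace_diagonal]
    exact Finset.sum_congr rfl fun i _ => (sq (lam i)).symm
  have hrhs : R.trace = ∑ i, R' i i := by
    rw [← hconj_trace R, ← hR', trace]
    rfl
  rw [hlhs, hrhs]
  exact Finset.sum_le_sum fun i _ => hRge i
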